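/- Let φ₀⁺ > 0 and γ ≥ 0, and assume global electroneutrality. Then there exists a unique pair (t, c) of real numbers satisfying: (1) φ₀⁺ - t = γ (f(t - c) - f(0))^{1/2}; (2) f(t - c) = f(-t - c); (3) |c| < t ≤ φ₀⁺. -/

import Mathlib

open Real Filter Set

/-- Lemma 2.7(ii): existence and uniqueness of the pair (t, c) solving
(1.19.1)-(1.19.3). -/
theorem stmt_5 (N1 N2 : ℕ) (hN1 : 0 < N1) (hN2 : 0 < N2)
    (a α : Fin N1 → ℝ) (b β : Fin N2 → ℝ)
    (ha : ∀ k, 0 < a k) (hα : ∀ k, 0 < α k)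
    (hb : ∀ l, 0 < b l) (hβ : ∀ l, 0 < β l)
    (hneu : ∑ k, a k * α k = ∑ l, b l * β l)
    (f : ℝ → ℝ)
    (hf : ∀ s, f s = ∑ k, α k * Real.exp (a k * s) + ∑ l, β l * Real.exp (-(b l) * s))
    (φ₀ γ : ℝ) (hφ₀ : 0 < φ₀) (hγ : 0 ≤ γ) :
    ∃! p : ℝ × ℝ,
      φ₀ - p.1 = γ * Real.sqrt (f (p.1 - p.2) - f 0) ∧
      f (p.1 - p.2) = f (-p.1 - p.2) ∧
      |p.2| < p.1 ∧ p.1 ≤ φ₀ := by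
  classical
  set F : ℝ → ℝ := fun s => ∑ k, α k * Real.exp (a k * s) + ∑ l, β l * Real.exp (-(b l) * s)
    with hF
  have hfeq : ∀ s, f s = F s := fun s => hf s
  set G : ℝ → ℝ := fun s => ∑ k, (a k * α k) * Real.exp (a k * s)
      - ∑ l, (b l * β l) * Real.exp (-(b l) * s) with hG
  have hcont : Continuous F := by
    apply Continuous.add <;> apply continuous_finset_sum <;> intro i _ <;> fun_prop
  have hd : ∀ s, HasDerivAt F (G s) s := by
    intro s
    have h1 : ∀ k : Fin N1, HasDerivAt (fun s => α k * Real.exp (a k * s))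
        ((a k * α k) * Real.exp (a k * s)) s := by
      intro k
      have := (((hasDerivAt_id s).const_mul (a k)).exp).const_mul (α k)
      simpa [mul_comm, mul_assoc, mul_left_comm] using this
    have h2 : ∀ l : Fin N2, HasDerivAt (fun s => β l * Real.exp (-(b l) * s))
        (-((b l * β l) * Real.exp (-(b l) * s))) s := by
      intro l
      have := (((hasDerivAt_id s).const_mul (-(b l))).exp).const_mul (β l)
      simpa [neg_mul, mul_comm, mul_assoc, mul_left_comm] using this
    have hs1 := HasDerivAt.fun_sum (u := Finset.univ) (fun k _ => h1 k)
    have hs2 := HasDerivAt.fun_sum (u := Finset.univ) (fun l _ => h2 l)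
    have := hs1.add hs2
    rw [Finset.sum_neg_distrib] at this
    exact this
  haveI : Nonempty (Fin N1) := ⟨⟨0, hN1⟩⟩
  haveI : Nonempty (Fin N2) := ⟨⟨0, hN2⟩⟩
  -- sign of G
  have hGpos : ∀ s, 0 < s → 0 < G s := by
    intro s hs
    have h1 : ∑ k, a k * α k < ∑ k, (a k * α k) * Real.exp (a k * s) := by
      apply Finset.sum_lt_sum_of_nonempty (Finset.univ_nonempty)
      intro k _
      have : 1 < Real.exp (a k * s) := by
        rw [show (1:ℝ) = Real.exp 0 by simp]
        exact Real.exp_lt_exp.2 (mul_pos (ha k) hs)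
      nlinarith [mul_pos (ha k) (hα k)]
    have h2 : ∑ l, (b l * β l) * Real.exp (-(b l) * s) < ∑ l, b l * β l := by
      apply Finset.sum_lt_sum_of_nonempty (Finset.univ_nonempty)
      intro l _
      have : Real.exp (-(b l) * s) < 1 := by
        rw [show (1:ℝ) = Real.exp 0 by simp]
        exact Real.exp_lt_exp.2 (by nlinarith [hb l])
      nlinarith [mul_pos (hb l) (hβ l)]
    simp only [hG]
    linarith [hneu]
  have hGneg : ∀ s, s < 0 → G s < 0 := by
    intro s hs
    have h1 : ∑ k, (a k * α k) * Real.exp (a k * s) < ∑ k, a k * α k := by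
      apply Finset.sum_lt_sum_of_nonempty (Finset.univ_nonempty)
      intro k _
      have : Real.exp (a k * s) < 1 := by
        rw [show (1:ℝ) = Real.exp 0 by simp]
        exact Real.exp_lt_exp.2 (by nlinarith [ha k])
      nlinarith [mul_pos (ha k) (hα k)]
    have h2 : ∑ l, b l * β l < ∑ l, (b l * β l) * Real.exp (-(b l) * s) := by
      apply Finset.sum_lt_sum_of_nonempty (Finset.univ_nonempty)
      intro l _
      have : 1 < Real.exp (-(b l) * s) := by
        rw [show (1:ℝ) = Real.exp 0 by simp]
        exact Real.exp_lt_exp.2 (by nlinarith [hb l])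
      nlinarith [mul_pos (hb l) (hβ l)]
    simp only [hG]
    linarith [hneu]
  have hmono : StrictMonoOn F (Ici 0) := by
    apply strictMonoOn_of_deriv_pos (convex_Ici 0) hcont.continuousOn
    intro x hx
    rw [interior_Ici] at hx
    rw [(hd x).deriv]
    exact hGpos x hx
  have hanti : StrictAntiOn F (Iic 0) := by
    apply strictAntiOn_of_deriv_neg (convex_Iic 0) hcont.continuousOn
    intro x hx
    rw [interior_Iic] at hx
    rw [(hd x).deriv]
    exact hGneg x hx
  -- tendsto
  let k0 : Fin N1 := ⟨0, hN1⟩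
  let l0 : Fin N2 := ⟨0, hN2⟩
  have htop : Tendsto F atTop atTop := by
    apply tendsto_atTop_mono (f := fun s => α k0 * Real.exp (a k0 * s))
    · intro s
      simp only [hF]
      have h1 : α k0 * Real.exp (a k0 * s) ≤ ∑ k, α k * Real.exp (a k * s) :=
        Finset.single_le_sum (f := fun k => α k * Real.exp (a k * s))
          (fun k _ => (mul_pos (hα k) (Real.exp_pos _)).le) (Finset.mem_univ k0)
      have h2 : (0:ℝ) ≤ ∑ l, β l * Real.exp (-(b l) * s) :=
        Finset.sum_nonneg fun l _ => (mul_pos (hβ l) (Real.exp_pos _)).le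
      linarith
    · exact Tendsto.const_mul_atTop (hα k0)
        (Real.tendsto_exp_atTop.comp (tendsto_id.const_mul_atTop (ha k0)))
  have hbot : Tendsto F atBot atTop := by
    apply tendsto_atTop_mono (f := fun s => β l0 * Real.exp (-(b l0) * s))
    · intro s
      simp only [hF]
      have h1 : β l0 * Real.exp (-(b l0) * s) ≤ ∑ l, β l * Real.exp (-(b l) * s) :=
        Finset.single_le_sum (f := fun l => β l * Real.exp (-(b l) * s))
          (fun l _ => (mul_pos (hβ l) (Real.exp_pos _)).le) (Finset.mem_univ l0)
      have h2 : (0:ℝ) ≤ ∑ k, α k * Real.exp (a k * s) :=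
        Finset.sum_nonneg fun k _ => (mul_pos (hα k) (Real.exp_pos _)).le
      linarith
    · refine Tendsto.const_mul_atTop (hβ l0) (Real.tendsto_exp_atTop.comp ?_)
      have h := (tendsto_neg_atBot_atTop : Tendsto (fun x:ℝ => -x) atBot atTop).const_mul_atTop
        (hb l0)
      refine h.congr' (Filter.Eventually.of_forall fun s => by ring)
  -- strict minimum at 0
  have hmin : ∀ s, s ≠ 0 → F 0 < F s := by
    intro s hs
    rcases lt_or_gt_of_ne hs with h | h
    · exact hanti (mem_Iic.2 h.le) (mem_Iic.2 le_rfl) h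
    · exact hmono (mem_Ici.2 le_rfl) (mem_Ici.2 h.le) h
  -- existence of negative-side inverse
  have hex : ∀ u : ℝ, 0 < u → ∃ x, 0 < x ∧ F (-x) = F u := by
    intro u hu
    have hy : F 0 < F u := hmin u hu.ne'
    obtain ⟨s0, hs0, hs0'⟩ :=
      ((hbot.eventually_ge_atTop (F u)).and (eventually_lt_atBot 0)).exists
    obtain ⟨x', hx'mem, hx'⟩ :=
      intermediate_value_Icc' hs0'.le hcont.continuousOn (Set.mem_Icc.2 ⟨hy.le, hs0⟩)
    refine ⟨-x', ?_, by rwa [neg_neg]⟩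
    rcases eq_or_lt_of_le hx'mem.2 with h | h
    · exfalso; rw [h] at hx'; exact hy.ne hx'
    · linarith
  -- positive-side inverse (for surjectivity of v)
  have hexu : ∀ y : ℝ, 0 < y → ∃ x, 0 < x ∧ F x = F (-y) := by
    intro y hy
    have hy' : F 0 < F (-y) := hmin (-y) (by linarith)
    obtain ⟨s0, hs0, hs0'⟩ :=
      ((htop.eventually_ge_atTop (F (-y))).and (eventually_gt_atTop 0)).exists
    obtain ⟨x, hxmem, hx⟩ :=
      intermediate_value_Icc hs0'.le hcont.continuousOn (Set.mem_Icc.2 ⟨hy'.le, hs0⟩)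
    refine ⟨x, ?_, hx⟩
    rcases eq_or_lt_of_le hxmem.1 with h | h
    · exfalso; rw [← h] at hx; exact hy'.ne hx
    · exact h
  -- the matching function v
  let v : ℝ → ℝ := fun u => if h : 0 < u then Classical.choose (hex u h) else u
  have hv_pos : ∀ u, 0 < u → 0 < v u ∧ F (-(v u)) = F u := by
    intro u h
    simp only [v, dif_pos h]
    exact Classical.choose_spec (hex u h)
  have hv_id : ∀ u, u ≤ 0 → v u = u := fun u h => by simp only [v, dif_neg (not_lt.2 h)]
  have huniq : ∀ u x, 0 < u → 0 < x → F (-x) = F u → x = v u := by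
    intro u x hu hx hFx
    obtain ⟨h1, h2⟩ := hv_pos u hu
    have heq : F (-x) = F (-(v u)) := by rw [hFx, h2]
    have := hanti.injOn (mem_Iic.2 (by linarith)) (mem_Iic.2 (by linarith)) heq
    linarith
  have hv_mono : Monotone v := by
    intro u1 u2 h12
    rcases le_or_gt u1 0 with h1 | h1
    · rcases le_or_gt u2 0 with h2 | h2
      · rw [hv_id u1 h1, hv_id u2 h2]; exact h12
      · rw [hv_id u1 h1]; exact le_trans h1 (hv_pos u2 h2).1.le
    · have h2 : 0 < u2 := lt_of_lt_of_le h1 h12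
      obtain ⟨p1, e1⟩ := hv_pos u1 h1
      obtain ⟨p2, e2⟩ := hv_pos u2 h2
      by_contra hlt
      push_neg at hlt
      have hlt' : F (-(v u2)) < F (-(v u1)) :=
        hanti (mem_Iic.2 (by linarith)) (mem_Iic.2 (by linarith)) (by linarith)
      rw [e1, e2] at hlt'
      have : F u1 ≤ F u2 := hmono.monotoneOn (mem_Ici.2 h1.le) (mem_Ici.2 h2.le) h12
      linarith
  have hv_smono : ∀ u1 u2, 0 < u1 → u1 < u2 → v u1 < v u2 := by
    intro u1 u2 h1 h12
    have h2 : 0 < u2 := h1.trans h12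
    obtain ⟨p1, e1⟩ := hv_pos u1 h1
    obtain ⟨p2, e2⟩ := hv_pos u2 h2
    rcases lt_or_ge (v u1) (v u2) with h | h
    · exact h
    exfalso
    have hle : F (-(v u2)) ≤ F (-(v u1)) :=
      hanti.antitoneOn (mem_Iic.2 (by linarith)) (mem_Iic.2 (by linarith)) (by linarith)
    rw [e1, e2] at hle
    have : F u1 < F u2 := hmono (mem_Ici.2 h1.le) (mem_Ici.2 h2.le) h12
    linarith
  have hv_surj : Function.Surjective v := by
    intro y
    rcases le_or_gt y 0 with h | h
    · exact ⟨y, hv_id y h⟩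
    · obtain ⟨x, hx, hFx⟩ := hexu y h
      exact ⟨x, (huniq x y hx h hFx.symm).symm⟩
  have hv_cont : Continuous v := hv_mono.continuous_of_surjective hv_surj
  -- the master function H
  let H : ℝ → ℝ := fun u => (u + v u) / 2 + γ * Real.sqrt (F u - F 0)
  have hH_cont : Continuous H := by
    apply Continuous.add
    · exact (continuous_id.add hv_cont).div_const 2
    · exact continuous_const.mul ((hcont.sub continuous_const).sqrt)
  have hH0 : H 0 = 0 := by simp [H, hv_id 0 le_rfl]
  have hv0 : v 0 = 0 := hv_id 0 le_rfl
  have hH_smono : StrictMonoOn H (Ici 0) := by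
    intro u1 hu1 u2 hu2 h12
    have hvle : v u1 ≤ v u2 := hv_mono h12.le
    have hFle : F u1 ≤ F u2 := hmono.monotoneOn hu1 hu2 h12.le
    have hsq : γ * Real.sqrt (F u1 - F 0) ≤ γ * Real.sqrt (F u2 - F 0) :=
      mul_le_mul_of_nonneg_left (Real.sqrt_le_sqrt (by linarith)) hγ
    simp only [H]
    linarith
  have hH_ge : ∀ u, 0 ≤ u → u / 2 ≤ H u := by
    intro u hu
    have h1 : 0 ≤ v u := by
      have := hv_mono hu
      rwa [hv0] at this
    have h2 : 0 ≤ γ * Real.sqrt (F u - F 0) := mul_nonneg hγ (Real.sqrt_nonneg _)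
    simp only [H]
    linarith
  -- existence of u*
  obtain ⟨u, humem, hustar⟩ :=
    intermediate_value_Icc (by linarith : (0:ℝ) ≤ 2 * φ₀) hH_cont.continuousOn
      (show φ₀ ∈ Set.Icc (H 0) (H (2 * φ₀)) from Set.mem_Icc.2
        ⟨by rw [hH0]; exact hφ₀.le,
         le_trans (by linarith) (hH_ge (2 * φ₀) (by linarith))⟩)
  have hupos : 0 < u := by
    rcases eq_or_lt_of_le humem.1 with h | h
    · exfalso; rw [← h, hH0] at hustar; linarith
    · exact h
  obtain ⟨hvpos, hveq⟩ := hv_pos u hupos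
  have hustar' : (u + v u) / 2 + γ * Real.sqrt (F u - F 0) = φ₀ := hustar
  simp only [hfeq]
  refine ⟨((u + v u) / 2, (v u - u) / 2), ⟨?_, ?_, ?_, ?_⟩, ?_⟩
  · rw [show (u + v u) / 2 - (v u - u) / 2 = u by ring]
    linarith
  · rw [show (u + v u) / 2 - (v u - u) / 2 = u by ring,
      show -((u + v u) / 2) - (v u - u) / 2 = -(v u) by ring]
    exact hveq.symm
  · rw [abs_lt]
    constructor <;> simp only <;> linarith
  · have h2 : 0 ≤ γ * Real.sqrt (F u - F 0) := mul_nonneg hγ (Real.sqrt_nonneg _)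
    simp only
    linarith
  · rintro ⟨t, c⟩ ⟨h1, h2, h3, h4⟩
    simp only at h1 h2 h3 h4
    obtain ⟨hc1, hc2⟩ := abs_lt.1 h3
    have huu : 0 < t - c := by linarith
    have hvv : 0 < t + c := by linarith
    have h2' : F (-(t + c)) = F (t - c) := by
      rw [show -(t + c) = -t - c by ring]; exact h2.symm
    have hveq2 : t + c = v (t - c) := huniq (t - c) (t + c) huu hvv h2'
    have hHu : H (t - c) = φ₀ := by
      simp only [H]
      rw [← hveq2]
      linarith
    have hueq : t - c = u :=
      hH_smono.injOn (mem_Ici.2 huu.le) (mem_Ici.2 hupos.le) (hHu.trans hustar.symm)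
    have hvu : t + c = v u := by rw [← hueq]; exact hveq2
    rw [Prod.mk.injEq]
    constructor <;> linarith
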